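/- Let 𝒜 = (P, X, d, ⪅, ◁) be an approximate asymptotic space equipped with a system of precompact sets (𝒦, ⊕), let p ∈ P, 𝒳 ⊆ X^ω, and Δ = (Δ_n) a sequence of positive reals. If player I has a strategy in the asymptotic game F_p to reach 𝒳, then player I has a strategy in the strong asymptotic game SF_p to build a sequence (K_n)_{n∈ω} such that every block sequence of (K_n)_{n∈ω} belongs to (𝒳)_Δ. -/

import Mathlib

open MeasureTheory Filter Topology TopologicalSpace

/-- The list `[x 0, …, x (n-1)]`. -/
def preSeq {X : Type*} (x : ℕ → X) (n : ℕ) : List X := (List.range n).map x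

/-- Interleaving of two sequences: `x 0, y 0, x 1, y 1, …`. -/
def itl {X : Type*} (x y : ℕ → X) : ℕ → X := fun k => if k % 2 = 0 then x (k / 2) else y (k / 2)

/-- Outcome produced by a strategy of player II against the moves `f` of player I. -/
def gOut {Q X : Type*} (τ : List Q → X) (f : ℕ → Q) : ℕ → X :=
  fun n => τ ((List.range (n + 1)).map f)

/-! ## Approximate Gowers spaces -/

structure ApproxGowersSpace (P : Type*) (X : Type*) where
  le : P → P → Prop
  les : P → P → Prop
  tri : X → P → Prop
  le_refl : ∀ p, le p p
  le_trans : ∀ p q r, le p q → le q r → le p r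
  les_refl : ∀ p, les p p
  les_trans : ∀ p q r, les p q → les q r → les p r
  le_imp_les : ∀ p q, le p q → les p q
  diag : ∀ p q, les p q → ∃ r, le r p ∧ le r q ∧ les p r
  decseq : ∀ f : ℕ → P, (∀ n, le (f (n + 1)) (f n)) → ∃ p, ∀ n, les p (f n)
  ext : ∀ p : P, ∃ x, tri x p
  mono : ∀ (x : X) (p q : P), tri x p → le p q → tri x q

/-- The `Δ`-expansion of a set of sequences in a metric space. -/
def expandSeq {X : Type*} [MetricSpace X] (Δ : ℕ → ℝ) (Y : Set (ℕ → X)) : Set (ℕ → X) :=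
  {x | ∃ y ∈ Y, ∀ n, dist (x n) (y n) ≤ Δ n}

namespace ApproxGowersSpace

variable {P X : Type*} (G : ApproxGowersSpace P X)

def lap (q p : P) : Prop := G.le q p ∧ G.les p q

/-- Player I has a strategy in the asymptotic game `F_p` to reach `Y`. -/
def IStratF (p : P) (Y : Set (ℕ → X)) : Prop :=
  ∃ σ : List X → P, (∀ s, G.lap (σ s) p) ∧
    ∀ x : ℕ → X, (∀ n, G.tri (x n) (σ (preSeq x n))) → x ∈ Y

/-- Player II has a strategy in Gowers' game `G_p` to reach `Y`. -/
def IIStratG (p : P) (Y : Set (ℕ → X)) : Prop :=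
  ∃ τ : List P → X, ∀ f : ℕ → P, (∀ n, G.le (f n) p) →
    (∀ n, G.tri (gOut τ f n) (f n)) ∧ gOut τ f ∈ Y

def advI (σ : P → List (X × P) → X × P) (p0 : P) (g : ℕ → X × P) (n : ℕ) : X × P :=
  σ p0 ((List.range n).map g)

def advIIps (p0 : P) (g : ℕ → X × P) : ℕ → P :=
  fun n => Nat.rec (motive := fun _ => P) p0 (fun k _ => (g k).2) n

def advIOut (σ : P → List (X × P) → X × P) (p0 : P) (g : ℕ → X × P) : ℕ → X :=
  itl (fun n => (advI σ p0 g n).1) (fun n => (g n).1)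

/-- Player I has a strategy in the game `A_p` to reach `Y`. -/
def IStratA (p : P) (Y : Set (ℕ → X)) : Prop :=
  ∃ σ : P → List (X × P) → X × P,
    (∀ p0 g n, G.tri (advI σ p0 g n).1 (advIIps p0 g n) ∧ G.lap (advI σ p0 g n).2 p) ∧
    ∀ p0 g, (∀ n, G.le (advIIps p0 g n) p) →
      (∀ n, G.tri (g n).1 ((advI σ p0 g n).2)) →
      advIOut σ p0 g ∈ Y

def advII (τ : List (X × P) → X × P) (h : ℕ → X × P) (n : ℕ) : X × P :=
  τ ((List.range (n + 1)).map h)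

def advIIpsB (p0 : P) (τ : List (X × P) → X × P) (h : ℕ → X × P) : ℕ → P :=
  fun n => Nat.rec (motive := fun _ => P) p0 (fun k _ => (advII τ h k).2) n

def advIIOut (τ : List (X × P) → X × P) (h : ℕ → X × P) : ℕ → X :=
  itl (fun n => (h n).1) (fun n => (advII τ h n).1)

/-- Player II has a strategy in the game `B_p` to reach `Y`. -/
def IIStratB (p : P) (Y : Set (ℕ → X)) : Prop :=
  ∃ (p0 : P) (τ : List (X × P) → X × P), G.lap p0 p ∧
    (∀ h n, G.tri (advII τ h n).1 ((h n).2) ∧ G.lap (advIIpsB p0 τ h (n + 1)) p) ∧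
    ∀ h : ℕ → X × P,
      (∀ n, G.tri (h n).1 (advIIpsB p0 τ h n) ∧ G.le ((h n).2) p) →
      advIIOut τ h ∈ Y

/-- The (approximate) pigeonhole principle. -/
def Pigeonhole [MetricSpace X] : Prop :=
  ∀ (p : P) (A : Set X) (δ : ℝ), 0 < δ → ∃ q, G.le q p ∧
    ((∀ x, G.tri x q → x ∉ A) ∨ ∀ x, G.tri x q → ∃ y ∈ A, dist x y ≤ δ)

/-- A set is strategically Ramsey (approximate version). -/
def StrategicallyRamsey [MetricSpace X] (Y : Set (ℕ → X)) : Prop :=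
  ∀ (Δ : ℕ → ℝ), (∀ n, 0 < Δ n) → ∀ p : P, ∃ q, G.le q p ∧
    (G.IStratF q Yᶜ ∨ G.IIStratG q (expandSeq Δ Y))

end ApproxGowersSpace

/-! ## Approximate asymptotic spaces and systems of precompact sets -/

structure ApproxAsympSpace (P : Type*) (X : Type*) where
  lap : P → P → Prop
  lap_refl : ∀ p, lap p p
  lap_trans : ∀ p q r, lap p q → lap q r → lap p r
  tri : X → P → Prop
  diag : ∀ p q r, lap q p → lap r p → ∃ u, lap u q ∧ lap u r
  ext : ∀ p : P, ∃ x, tri x p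
  mono : ∀ (x : X) (p q : P), tri x p → lap p q → tri x q

namespace ApproxAsympSpace

variable {P X : Type*} (A : ApproxAsympSpace P X)

/-- `K ◁ p` for a set `K`: the points of `K` related to `p` are dense in `K`. -/
def denseIn [MetricSpace X] (K : Set X) (p : P) : Prop :=
  K ⊆ closure {x | x ∈ K ∧ A.tri x p}

/-- Player I has a strategy in the asymptotic game `F_p` to reach `Y`. -/
def IStratF (p : P) (Y : Set (ℕ → X)) : Prop :=
  ∃ σ : List X → P, (∀ s, A.lap (σ s) p) ∧
    ∀ x : ℕ → X, (∀ n, A.tri (x n) (σ (preSeq x n))) → x ∈ Y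

/-- Player I has a strategy in the strong asymptotic game `SF_p` (where II plays sets in `𝒦`)
to build a sequence satisfying `Φ`. -/
def IStratSF [MetricSpace X] (𝒦 : Set (Set X)) (p : P) (Φ : (ℕ → Set X) → Prop) : Prop :=
  ∃ σ : List (Set X) → P, (∀ s, A.lap (σ s) p) ∧
    ∀ Ks : ℕ → Set X, (∀ n, Ks n ∈ 𝒦 ∧ A.denseIn (Ks n) (σ (preSeq Ks n))) → Φ Ks

end ApproxAsympSpace

/-- A system of precompact sets for an approximate asymptotic space. -/
structure PrecompactSystem {P X : Type*} [MetricSpace X] (A : ApproxAsympSpace P X) where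
  mem : Set (Set X)
  precompact : ∀ K ∈ mem, IsCompact (closure K)
  op : Set X → Set X → Set X
  op_mem : ∀ K ∈ mem, ∀ L ∈ mem, op K L ∈ mem
  op_assoc : ∀ K ∈ mem, ∀ L ∈ mem, ∀ M ∈ mem, op (op K L) M = op K (op L M)
  compat : ∀ (p : P), ∀ K ∈ mem, ∀ L ∈ mem,
    A.denseIn K p → A.denseIn L p → A.denseIn (op K L) p

/-- `⊕_{n ∈ A} K n`, for a finite nonempty set `A` of integers (taken in increasing order). -/
def sysSum {X : Type*} (op : Set X → Set X → Set X) (K : ℕ → Set X) (A : Finset ℕ) : Set X :=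
  match A.sort (· ≤ ·) with
  | [] => ∅
  | a :: t => t.foldl (fun S n => op S (K n)) (K a)

/-- Block sequences of a sequence `(K_n)` of sets, relative to the operation `op`. -/
def IsBlockSeqOf {X : Type*} (op : Set X → Set X → Set X) (K : ℕ → Set X) (x : ℕ → X) : Prop :=
  ∃ A : ℕ → Finset ℕ, (∀ i, (A i).Nonempty) ∧
    (∀ i, ∀ m ∈ A i, ∀ m' ∈ A (i + 1), m < m') ∧
    ∀ i, x i ∈ sysSum op K (A i)

/-- The approximate asymptotic space underlying an approximate Gowers space. -/
def ApproxGowersSpace.toAsymp {P X : Type*} (G : ApproxGowersSpace P X) :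
    ApproxAsympSpace P X where
  lap := G.lap
  lap_refl := fun p => ⟨G.le_refl p, G.les_refl p⟩
  lap_trans := fun p q r h1 h2 => ⟨G.le_trans _ _ _ h1.1 h2.1, G.les_trans _ _ _ h2.2 h1.2⟩
  tri := G.tri
  diag := fun p q r hq hr => by
    obtain ⟨u, hu1, hu2, hu3⟩ :=
      G.diag q r (G.les_trans _ _ _ (G.le_imp_les _ _ hq.1) hr.2)
    exact ⟨u, ⟨hu1, hu3⟩,
      ⟨hu2, G.les_trans _ _ _ (G.les_trans _ _ _ (G.le_imp_les _ _ hr.1) hq.2) hu3⟩⟩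
  ext := G.ext
  mono := fun x p q h hpq => G.mono x p q h hpq.1

namespace Stmt17Aux
set_option linter.unusedSectionVars false

open ApproxAsympSpace

variable {P X : Type*} [MetricSpace X]

/-! ### Finite meets of conditions -/

theorem lap_meet_list (A : ApproxAsympSpace P X) (p : P) :
    ∀ l : List P, (∀ r ∈ l, A.lap r p) → ∃ u, A.lap u p ∧ ∀ r ∈ l, A.lap u r := by
  intro l
  induction l with
  | nil => exact fun _ => ⟨p, A.lap_refl p, by simp⟩
  | cons r l ih =>
    intro hl
    obtain ⟨u, hup, hul⟩ := ih (fun r' hr' => hl r' (List.mem_cons_of_mem _ hr'))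
    obtain ⟨v, hvu, hvr⟩ := A.diag p u r hup (hl r (List.mem_cons_self))
    refine ⟨v, A.lap_trans _ _ _ hvu hup, ?_⟩
    intro r' hr'
    rcases List.mem_cons.1 hr' with h1 | h2
    · exact h1 ▸ hvr
    · exact A.lap_trans _ _ _ hvu (hul r' h2)

open Classical in
noncomputable def meetOf (A : ApproxAsympSpace P X) (l : List P) (p : P) : P :=
  if h : ∃ u, A.lap u p ∧ ∀ r ∈ l, A.lap u r then h.choose else p

theorem meetOf_lap (A : ApproxAsympSpace P X) (l : List P) (p : P) :
    A.lap (meetOf A l p) p := by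
  unfold meetOf
  split
  · next h => exact h.choose_spec.1
  · exact A.lap_refl p

theorem meetOf_spec (A : ApproxAsympSpace P X) (l : List P) (p : P)
    (h : ∀ r ∈ l, A.lap r p) : ∀ r ∈ l, A.lap (meetOf A l p) r := by
  have hex := lap_meet_list A p l h
  unfold meetOf
  rw [dif_pos hex]
  exact hex.choose_spec.2

/-! ### Finite nets -/

open Classical in
noncomputable def netOf (D Sb : Set X) (δ : ℝ) : List X :=
  if h : ∃ l : List X, ∀ x ∈ Sb, ∃ z ∈ l, z ∈ D ∧ dist x z ≤ δ then h.choose else []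

theorem netOf_spec {D Sb : Set X} {δ : ℝ}
    (hTB : TotallyBounded Sb) (hDS : D ⊆ Sb) (hdense : Sb ⊆ closure D) (hδ : 0 < δ) :
    ∀ x ∈ Sb, ∃ z ∈ netOf D Sb δ, z ∈ D ∧ dist x z ≤ δ := by
  have hex : ∃ l : List X, ∀ x ∈ Sb, ∃ z ∈ l, z ∈ D ∧ dist x z ≤ δ := by
    have hTBD : TotallyBounded D := hTB.subset hDS
    obtain ⟨t, htD, htfin, htcov⟩ :=
      totallyBounded_iff_subset.1 hTBD _ (Metric.dist_mem_uniformity (half_pos hδ))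
    refine ⟨htfin.toFinset.toList, ?_⟩
    intro x hx
    obtain ⟨d, hdD, hdd⟩ := Metric.mem_closure_iff.1 (hdense hx) _ (half_pos hδ)
    obtain ⟨y, hyt, hdy⟩ := Set.mem_iUnion₂.1 (htcov hdD)
    refine ⟨y, ?_, htD hyt, ?_⟩
    · rw [Finset.mem_toList, Set.Finite.mem_toFinset]; exact hyt
    · have hdy' : dist d y < δ / 2 := hdy
      calc dist x y ≤ dist x d + dist d y := dist_triangle _ _ _
        _ ≤ δ := by linarith
  unfold netOf
  rw [dif_pos hex]
  exact hex.choose_spec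

/-! ### All short lists over a finite alphabet -/

def allLists : ℕ → List X → List (List X)
  | 0, _ => [[]]
  | n + 1, l => [] :: (allLists n l).flatMap (fun t => l.map (fun z => z :: t))

theorem mem_allLists : ∀ (t : List X) (k : ℕ) (l : List X),
    (∀ z ∈ t, z ∈ l) → t.length ≤ k → t ∈ allLists k l := by
  intro t
  induction t with
  | nil => intro k l _ _; cases k <;> simp [allLists]
  | cons z t ih =>
    intro k l hz hlen
    match k with
    | 0 => simp at hlen
    | k + 1 =>
      refine List.mem_cons_of_mem _ (List.mem_flatMap.2 ⟨t, ?_, ?_⟩)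
      · exact ih k l (fun w hw => hz w (List.mem_cons_of_mem _ hw))
          (Nat.succ_le_succ_iff.1 hlen)
      · exact List.mem_map.2 ⟨z, hz z (List.mem_cons_self), rfl⟩

/-! ### sysSum facts -/

theorem denseIn_mono (A : ApproxAsympSpace P X) {K : Set X} {q q' : P}
    (h : A.denseIn K q) (hq : A.lap q q') : A.denseIn K q' := by
  intro x hx
  refine closure_mono ?_ (h hx)
  intro y hy
  exact ⟨hy.1, A.mono y q q' hy.2 hq⟩

theorem foldl_good (A : ApproxAsympSpace P X) (S : PrecompactSystem A)
    (K : ℕ → Set X) (q : P) :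
    ∀ (l : List ℕ) (acc : Set X), acc ∈ S.mem → A.denseIn acc q →
      (∀ m ∈ l, K m ∈ S.mem ∧ A.denseIn (K m) q) →
      l.foldl (fun Sx n => S.op Sx (K n)) acc ∈ S.mem ∧
        A.denseIn (l.foldl (fun Sx n => S.op Sx (K n)) acc) q := by
  intro l
  induction l with
  | nil => intro acc h1 h2 _; exact ⟨h1, h2⟩
  | cons m l ih =>
    intro acc h1 h2 h3
    have hm := h3 m (List.mem_cons_self)
    exact ih (S.op acc (K m)) (S.op_mem _ h1 _ hm.1)
      (S.compat q _ h1 _ hm.1 h2 hm.2)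
      (fun m' hm' => h3 m' (List.mem_cons_of_mem _ hm'))

theorem sysSum_good (A : ApproxAsympSpace P X) (S : PrecompactSystem A)
    (K : ℕ → Set X) (q : P) (B : Finset ℕ) (hB : B.Nonempty)
    (h : ∀ m ∈ B, K m ∈ S.mem ∧ A.denseIn (K m) q) :
    sysSum S.op K B ∈ S.mem ∧ A.denseIn (sysSum S.op K B) q := by
  unfold sysSum
  rcases hs : Finset.sort B (· ≤ ·) with _ | ⟨a, t⟩
  · exfalso
    have := (Finset.mem_sort (α := ℕ) (r := (· ≤ ·))).2 hB.choose_spec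
    rw [hs] at this
    simp at this
  · have hmem : ∀ m ∈ a :: t, m ∈ B := by
      intro m hm
      exact (Finset.mem_sort (α := ℕ) (r := (· ≤ ·))).1 (hs ▸ hm)
    have ha := h a (hmem a (List.mem_cons_self))
    exact foldl_good A S K q t (K a) ha.1 ha.2
      (fun m hm => h m (hmem m (List.mem_cons_of_mem _ hm)))

theorem foldl_congr {X : Type*} (op : Set X → Set X → Set X) (K K' : ℕ → Set X) :
    ∀ (l : List ℕ) (acc : Set X), (∀ m ∈ l, K m = K' m) →
      l.foldl (fun Sx n => op Sx (K n)) acc = l.foldl (fun Sx n => op Sx (K' n)) acc := by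
  intro l
  induction l with
  | nil => intro _ _; simp
  | cons m l ih =>
    intro acc h
    simp only [List.foldl_cons]
    rw [h m (List.mem_cons_self)]
    exact ih _ (fun m' hm' => h m' (List.mem_cons_of_mem _ hm'))

theorem sysSum_congr {X : Type*} (op : Set X → Set X → Set X) (K K' : ℕ → Set X)
    (B : Finset ℕ) (h : ∀ m ∈ B, K m = K' m) :
    sysSum op K B = sysSum op K' B := by
  unfold sysSum
  rcases hs : Finset.sort B (· ≤ ·) with _ | ⟨a, t⟩
  · rfl
  · have hmem : ∀ m ∈ a :: t, m ∈ B := by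
      intro m hm
      exact (Finset.mem_sort (α := ℕ) (r := (· ≤ ·))).1 (hs ▸ hm)
    show t.foldl (fun Sx n => op Sx (K n)) (K a) = t.foldl (fun Sx n => op Sx (K' n)) (K' a)
    rw [h a (hmem a (List.mem_cons_self))]
    exact foldl_congr op K K' t _ (fun m hm => h m (hmem m (List.mem_cons_of_mem _ hm)))

/-! ### delmin -/

noncomputable def delmin (Δ : ℕ → ℝ) (n : ℕ) : ℝ :=
  (Finset.range (n + 1)).inf' ⟨0, Finset.mem_range.2 (Nat.succ_pos n)⟩ Δ

theorem delmin_pos {Δ : ℕ → ℝ} (hΔ : ∀ n, 0 < Δ n) (n : ℕ) : 0 < delmin Δ n :=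
  (Finset.lt_inf'_iff _).2 fun i _ => hΔ i

theorem delmin_le (Δ : ℕ → ℝ) {i n : ℕ} (h : i ≤ n) : delmin Δ n ≤ Δ i :=
  Finset.inf'_le Δ (Finset.mem_range.2 (Nat.lt_succ_of_le h))

/-! ### preSeq facts -/

theorem preSeq_succ {Y : Type*} (Ks : ℕ → Y) (n : ℕ) :
    preSeq Ks (n + 1) = preSeq Ks n ++ [Ks n] := by
  simp [preSeq, List.range_succ]

@[simp] theorem preSeq_length {Y : Type*} (Ks : ℕ → Y) (n : ℕ) :
    (preSeq Ks n).length = n := by simp [preSeq]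

theorem preSeq_getD (Ks : ℕ → Set X) {i n : ℕ} (hi : i < n) :
    (preSeq Ks n).getD i ∅ = Ks i := by
  simp [preSeq, List.getD_eq_getElem?_getD, List.getElem?_map, List.getElem?_range, hi]

/-! ### The state machine realizing player I's strategy in the strong game -/

variable (A : ApproxAsympSpace P X) (S : PrecompactSystem A)
  (σ : List X → P) (Δ : ℕ → ℝ) (p : P)

noncomputable def nets (ps : List P) (n : ℕ) (KsL : ℕ → Set X) : List X :=
  ((Finset.range (n + 1)).powerset.toList).flatMap
    (fun B => if hB : B.Nonempty then
        netOf {x | x ∈ sysSum S.op KsL B ∧ A.tri x (ps.getD (n - B.min' hB) p)}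
          (sysSum S.op KsL B) (delmin Δ n)
      else [])

noncomputable def stepFun (s : List (Set X)) (Kn : Set X) (st : List P × List X) :
    List P × List X :=
  (meetOf A (st.1.getD 0 p ::
      (allLists (s.length + 1)
        (st.2 ++ nets A S Δ p st.1 s.length (fun i => (s ++ [Kn]).getD i ∅))).map σ) p :: st.1,
   st.2 ++ nets A S Δ p st.1 s.length (fun i => (s ++ [Kn]).getD i ∅))

noncomputable def stateAux : List (Set X) → List P × List X
  | [] => ([σ []], [])
  | K :: t => stepFun A S σ Δ p t.reverse K (stateAux t)

noncomputable def stateOf (s : List (Set X)) : List P × List X :=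
  stateAux A S σ Δ p s.reverse

theorem stateOf_append (s : List (Set X)) (K : Set X) :
    stateOf A S σ Δ p (s ++ [K]) = stepFun A S σ Δ p s K (stateOf A S σ Δ p s) := by
  simp [stateOf, stateAux, List.reverse_append]

theorem stateOf_lap (hσ1 : ∀ s, A.lap (σ s) p) (s : List (Set X)) :
    A.lap ((stateOf A S σ Δ p s).1.getD 0 p) p := by
  unfold stateOf
  rcases s.reverse with _ | ⟨K, t⟩
  · exact hσ1 []
  · exact meetOf_lap A _ p

/-! ### Facts about a fixed run -/

noncomputable def pnF (Ks : ℕ → Set X) (n : ℕ) : P :=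
  (stateOf A S σ Δ p (preSeq Ks n)).1.getD 0 p

noncomputable def ZnF (Ks : ℕ → Set X) (n : ℕ) : List X :=
  (stateOf A S σ Δ p (preSeq Ks n)).2

theorem state_succ (Ks : ℕ → Set X) (n : ℕ) :
    stateOf A S σ Δ p (preSeq Ks (n + 1)) =
      stepFun A S σ Δ p (preSeq Ks n) (Ks n) (stateOf A S σ Δ p (preSeq Ks n)) := by
  rw [preSeq_succ, stateOf_append]

theorem Zn_succ (Ks : ℕ → Set X) (n : ℕ) :
    ZnF A S σ Δ p Ks (n + 1) = ZnF A S σ Δ p Ks n ++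
      nets A S Δ p (stateOf A S σ Δ p (preSeq Ks n)).1 n
        (fun i => (preSeq Ks (n + 1)).getD i ∅) := by
  unfold ZnF
  rw [state_succ]
  simp only [stepFun, preSeq_length]
  rw [preSeq_succ]

theorem pl_succ (Ks : ℕ → Set X) (n : ℕ) :
    (stateOf A S σ Δ p (preSeq Ks (n + 1))).1 =
      meetOf A (pnF A S σ Δ p Ks n ::
          (allLists (n + 1) (ZnF A S σ Δ p Ks (n + 1))).map σ) p
        :: (stateOf A S σ Δ p (preSeq Ks n)).1 := by
  rw [state_succ, Zn_succ]
  simp only [stepFun, preSeq_length, pnF, ZnF]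
  rw [preSeq_succ]

theorem pn_succ (Ks : ℕ → Set X) (n : ℕ) :
    pnF A S σ Δ p Ks (n + 1) =
      meetOf A (pnF A S σ Δ p Ks n ::
          (allLists (n + 1) (ZnF A S σ Δ p Ks (n + 1))).map σ) p := by
  unfold pnF
  rw [pl_succ]
  rfl

theorem pn_zero (Ks : ℕ → Set X) : pnF A S σ Δ p Ks 0 = σ [] := by
  simp [pnF, preSeq, stateOf, stateAux]

theorem Zn_zero (Ks : ℕ → Set X) : ZnF A S σ Δ p Ks 0 = [] := by
  simp [ZnF, preSeq, stateOf, stateAux]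

theorem pn_lap (hσ1 : ∀ s, A.lap (σ s) p) (Ks : ℕ → Set X) (n : ℕ) :
    A.lap (pnF A S σ Δ p Ks n) p := stateOf_lap A S σ Δ p hσ1 _

theorem pn_meet_cond (hσ1 : ∀ s, A.lap (σ s) p) (Ks : ℕ → Set X) (n : ℕ) :
    ∀ r ∈ pnF A S σ Δ p Ks n :: (allLists (n + 1) (ZnF A S σ Δ p Ks (n + 1))).map σ,
      A.lap r p := by
  intro r hr
  rcases List.mem_cons.1 hr with h | h
  · exact h ▸ pn_lap A S σ Δ p hσ1 Ks n
  · obtain ⟨t, _, rfl⟩ := List.mem_map.1 h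
    exact hσ1 t

theorem pn_chain (hσ1 : ∀ s, A.lap (σ s) p) (Ks : ℕ → Set X) (n : ℕ) :
    A.lap (pnF A S σ Δ p Ks (n + 1)) (pnF A S σ Δ p Ks n) := by
  rw [pn_succ]
  exact meetOf_spec A _ p (pn_meet_cond A S σ Δ p hσ1 Ks n) _ (List.mem_cons_self)

theorem pn_chain_le (hσ1 : ∀ s, A.lap (σ s) p) (Ks : ℕ → Set X) {m n : ℕ} (h : m ≤ n) :
    A.lap (pnF A S σ Δ p Ks n) (pnF A S σ Δ p Ks m) := by
  induction n, h using Nat.le_induction with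
  | base => exact A.lap_refl _
  | succ n hmn ih => exact A.lap_trans _ _ _ (pn_chain A S σ Δ p hσ1 Ks n) ih

theorem pn_sigma (hσ1 : ∀ s, A.lap (σ s) p) (Ks : ℕ → Set X) :
    ∀ n, ∀ t ∈ allLists n (ZnF A S σ Δ p Ks n), A.lap (pnF A S σ Δ p Ks n) (σ t) := by
  intro n t ht
  match n with
  | 0 =>
    rw [Zn_zero] at ht
    have : t = [] := by simpa [allLists] using ht
    rw [this, pn_zero]
    exact A.lap_refl _
  | n + 1 =>
    rw [pn_succ]
    exact meetOf_spec A _ p (pn_meet_cond A S σ Δ p hσ1 Ks n) _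
      (List.mem_cons_of_mem _ (List.mem_map.2 ⟨t, ht, rfl⟩))

theorem Zn_mono (Ks : ℕ → Set X) {m n : ℕ} (h : m ≤ n) :
    ∀ z ∈ ZnF A S σ Δ p Ks m, z ∈ ZnF A S σ Δ p Ks n := by
  induction n, h using Nat.le_induction with
  | base => exact fun z hz => hz
  | succ n hmn ih =>
    intro z hz
    rw [Zn_succ]
    exact List.mem_append_left _ (ih z hz)

theorem pl_getD (Ks : ℕ → Set X) :
    ∀ n, ∀ j ≤ n, (stateOf A S σ Δ p (preSeq Ks n)).1.getD (n - j) p = pnF A S σ Δ p Ks j := by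
  intro n
  induction n with
  | zero =>
    intro j hj
    have : j = 0 := Nat.le_zero.1 hj
    subst this
    rfl
  | succ n ih =>
    intro j hj
    rcases Nat.eq_or_lt_of_le hj with rfl | hlt
    · simp [pnF]
    · have hj' : j ≤ n := Nat.lt_succ_iff.1 hlt
      rw [pl_succ, Nat.succ_sub hj', List.getD_cons_succ]
      exact ih j hj'

theorem net_key (hσ1 : ∀ s, A.lap (σ s) p) (hΔ : ∀ n, 0 < Δ n) (Ks : ℕ → Set X)
    (hKs : ∀ n, Ks n ∈ S.mem ∧ A.denseIn (Ks n) (pnF A S σ Δ p Ks n))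
    (n : ℕ) (B : Finset ℕ) (hB : B.Nonempty) (hBsub : B ⊆ Finset.range (n + 1)) :
    ∀ x ∈ sysSum S.op Ks B, ∃ z, z ∈ ZnF A S σ Δ p Ks (n + 1) ∧
      A.tri z (pnF A S σ Δ p Ks (B.min' hB)) ∧ dist x z ≤ delmin Δ n := by
  intro x hx
  have hjB : B.min' hB ∈ B := B.min'_mem hB
  have hjn : B.min' hB ≤ n := Nat.lt_succ_iff.1 (Finset.mem_range.1 (hBsub hjB))
  have hgood : sysSum S.op Ks B ∈ S.mem ∧
      A.denseIn (sysSum S.op Ks B) (pnF A S σ Δ p Ks (B.min' hB)) := by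
    refine sysSum_good A S Ks _ B hB (fun m hm => ⟨(hKs m).1, ?_⟩)
    exact denseIn_mono A (hKs m).2 (pn_chain_le A S σ Δ p hσ1 Ks (Finset.min'_le B m hm))
  have hTB : TotallyBounded (sysSum S.op Ks B) :=
    TotallyBounded.subset subset_closure (S.precompact _ hgood.1).totallyBounded
  obtain ⟨z, hzn, hzD, hzd⟩ :=
    netOf_spec (D := {y | y ∈ sysSum S.op Ks B ∧ A.tri y (pnF A S σ Δ p Ks (B.min' hB))})
      hTB (fun y hy => hy.1) hgood.2 (delmin_pos hΔ n) x hx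
  refine ⟨z, ?_, hzD.2, hzd⟩
  rw [Zn_succ]
  refine List.mem_append_right _ ?_
  unfold nets
  refine List.mem_flatMap.2 ⟨B, ?_, ?_⟩
  · rw [Finset.mem_toList, Finset.mem_powerset]; exact hBsub
  · rw [dif_pos hB]
    have h1 : sysSum S.op (fun i => (preSeq Ks (n + 1)).getD i ∅) B = sysSum S.op Ks B :=
      sysSum_congr _ _ _ B (fun m hm => preSeq_getD Ks (Finset.mem_range.1 (hBsub hm)))
    have h2 : (stateOf A S σ Δ p (preSeq Ks n)).1.getD (n - B.min' hB) p =
        pnF A S σ Δ p Ks (B.min' hB) := pl_getD A S σ Δ p Ks n _ hjn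
    rw [h1, h2]
    exact hzn

end Stmt17Aux
theorem stmt17 {P X : Type} [Nonempty P] [MetricSpace X] [Nonempty X]
    [TopologicalSpace.SeparableSpace X]
    (A : ApproxAsympSpace P X) (S : PrecompactSystem A)
    (p : P) (𝒳 : Set (ℕ → X)) (Δ : ℕ → ℝ) (hΔ : ∀ n, 0 < Δ n)
    (h : A.IStratF p 𝒳) :
    A.IStratSF S.mem p
      (fun Ks => ∀ x : ℕ → X, IsBlockSeqOf S.op Ks x → x ∈ expandSeq Δ 𝒳) := by
  classical
  obtain ⟨σ, hσ1, hσ2⟩ := h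
  refine ⟨fun s => (Stmt17Aux.stateOf A S σ Δ p s).1.getD 0 p,
    fun s => Stmt17Aux.stateOf_lap A S σ Δ p hσ1 s, ?_⟩
  intro Ks hKs x hbl
  obtain ⟨Bf, hne, hlt, hmem⟩ := hbl
  have hKs' : ∀ n, Ks n ∈ S.mem ∧ A.denseIn (Ks n) (Stmt17Aux.pnF A S σ Δ p Ks n) :=
    fun n => ⟨(hKs n).1, (hKs n).2⟩
  set μ : ℕ → ℕ := fun i => (Bf i).min' (hne i) with hμ
  set m : ℕ → ℕ := fun i => (Bf i).max' (hne i) with hm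
  have hμm : ∀ i, μ i ≤ m i := fun i => Finset.min'_le _ _ (Finset.max'_mem _ _)
  have hstep : ∀ i, m i < μ (i + 1) :=
    fun i => hlt i _ (Finset.max'_mem _ _) _ (Finset.min'_mem _ _)
  have hμ_ge : ∀ i, i ≤ μ i := by
    intro i
    induction i with
    | zero => exact Nat.zero_le _
    | succ i ih =>
      have h1 := hstep i
      have h2 := hμm i
      omega
  have hii : ∀ i, i ≤ m i := fun i => le_trans (hμ_ge i) (hμm i)
  have hlt' : ∀ i, ∀ j < i, m j < μ i := by
    intro i
    induction i with
    | zero => intro j hj; omega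
    | succ i ih =>
      intro j hj
      rcases Nat.lt_succ_iff_lt_or_eq.1 hj with hj' | rfl
      · have h1 := ih j hj'
        have h2 := hμm i
        have h3 := hstep i
        omega
      · exact hstep j
  have hz : ∀ i, ∃ z, z ∈ Stmt17Aux.ZnF A S σ Δ p Ks (m i + 1) ∧
      A.tri z (Stmt17Aux.pnF A S σ Δ p Ks (μ i)) ∧ dist (x i) z ≤ Δ i := by
    intro i
    have hBsub : Bf i ⊆ Finset.range (m i + 1) :=
      fun a ha => Finset.mem_range.2 (Nat.lt_succ_of_le (Finset.le_max' _ _ ha))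
    obtain ⟨z, hzZ, hztri, hzd⟩ :=
      Stmt17Aux.net_key A S σ Δ p hσ1 hΔ Ks hKs' (m i) (Bf i) (hne i) hBsub (x i) (hmem i)
    exact ⟨z, hzZ, hztri, le_trans hzd (Stmt17Aux.delmin_le Δ (hii i))⟩
  choose z hzZ hztri hzd using hz
  refine ⟨z, ?_, hzd⟩
  apply hσ2
  intro i
  have hmem_all : preSeq z i ∈ Stmt17Aux.allLists (μ i) (Stmt17Aux.ZnF A S σ Δ p Ks (μ i)) := by
    apply Stmt17Aux.mem_allLists
    · intro w hw
      obtain ⟨j, hj, rfl⟩ : ∃ j, j < i ∧ z j = w := by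
        simpa [preSeq, List.mem_map, List.mem_range] using hw
      exact Stmt17Aux.Zn_mono A S σ Δ p Ks (hlt' i j hj) _ (hzZ j)
    · simpa [Stmt17Aux.preSeq_length] using hμ_ge i
  exact A.mono _ _ _ (hztri i) (Stmt17Aux.pn_sigma A S σ Δ p hσ1 Ks (μ i) _ hmem_all)
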